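/- Let A be a local Noetherian ring with unique associated prime 𝔯, B a local Noetherian A-algebra, and b ∈ B a non-zero-divisor non-unit such that B/(b) is A-flat and 𝔭 = (𝔯B, b) is prime. Then 𝔭 has height exactly 1. -/

import Mathlib

open IsLocalRing

lemma isArtinian_of_tower_of_surjective {R S M : Type*} [CommRing R] [CommRing S] [Algebra R S]
    [AddCommGroup M] [Module R M] [Module S M] [IsScalarTower R S M]
    (hf : Function.Surjective (algebraMap R S)) [IsArtinian S M] : IsArtinian R M := by
  let F : Submodule R M → Submodule S M := fun N =>
    { carrier := N
      add_mem' := fun h1 h2 => N.add_mem h1 h2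
      zero_mem' := N.zero_mem
      smul_mem' := by
        intro s x hx
        obtain ⟨r, rfl⟩ := hf s
        rw [algebraMap_smul]
        exact N.smul_mem r hx }
  have hF : StrictMono F := by
    intro N1 N2 h
    rw [SetLike.lt_iff_le_and_exists] at h ⊢
    exact ⟨fun x hx => h.1 hx, h.2⟩
  have : WellFoundedLT (Submodule S M) := ⟨(isArtinian_iff S M).mp inferInstance⟩
  exact (isArtinian_iff R M).mpr (hF.wellFoundedLT).wf

universe u v

lemma art_aux {R : Type u} [CommRing R] [IsNoetherianRing R] (I : Ideal R)
    (hmax : I.IsMaximal) : ∀ (k : ℕ) (M : Type v) [AddCommGroup M] [Module R M]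
    [Module.Finite R M], I ^ k • (⊤ : Submodule R M) = ⊥ → IsArtinian R M := by
  intro k
  induction k with
  | zero =>
    intro M _ _ _ h
    rw [pow_zero, Ideal.one_eq_top, Submodule.top_smul] at h
    have : Subsingleton M := by
      constructor
      intro a b
      have ha : a ∈ (⊤ : Submodule R M) := trivial
      have hb : b ∈ (⊤ : Submodule R M) := trivial
      rw [h, Submodule.mem_bot] at ha hb
      rw [ha, hb]
    exact isArtinian_of_finite
  | succ k ih =>
    intro M _ _ _ h
    haveI := hmax
    haveI : IsArtinianRing (R ⧸ I) := by
      letI := Ideal.Quotient.field I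
      exact inferInstance
    haveI : IsScalarTower R (R ⧸ I) (M ⧸ (I • (⊤ : Submodule R M))) :=
      Module.IsTorsionBySet.isScalarTower _
    haveI : Module.Finite R (M ⧸ (I • (⊤ : Submodule R M))) :=
      Module.Finite.quotient R _
    haveI : Module.Finite (R ⧸ I) (M ⧸ (I • (⊤ : Submodule R M))) :=
      Module.Finite.of_restrictScalars_finite R (R ⧸ I) _
    haveI hart1 : IsArtinian R (M ⧸ (I • (⊤ : Submodule R M))) :=
      isArtinian_of_tower_of_surjective (S := R ⧸ I) Ideal.Quotient.mk_surjective
    haveI : Module.Finite R ↥(I • (⊤ : Submodule R M)) :=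
      Module.Finite.iff_fg.mpr (IsNoetherian.noetherian _)
    have hNk : I ^ k • (⊤ : Submodule R ↥(I • (⊤ : Submodule R M))) = ⊥ := by
      apply Submodule.map_injective_of_injective
        (Submodule.injective_subtype (I • (⊤ : Submodule R M)))
      rw [Submodule.map_smul'', Submodule.map_top, Submodule.range_subtype, Submodule.map_bot,
        ← Submodule.smul_assoc, Ideal.smul_eq_mul, ← pow_succ]
      exact h
    haveI hart2 : IsArtinian R ↥(I • (⊤ : Submodule R M)) := ih _ hNk
    exact isArtinian_of_range_eq_ker (I • (⊤ : Submodule R M)).subtype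
      (I • (⊤ : Submodule R M)).mkQ
      (by rw [Submodule.ker_mkQ, Submodule.range_subtype])

lemma artinian_of_nilpotent_maximal {R : Type u} [CommRing R] [IsNoetherianRing R]
    (I : Ideal R) (hmax : I.IsMaximal) (hnil : IsNilpotent I) : IsArtinianRing R := by
  obtain ⟨k, hk⟩ := hnil
  exact art_aux I hmax k R (by
    rw [← Ideal.one_eq_top, smul_eq_mul, mul_one, hk, Ideal.zero_eq_bot])

lemma mem_associatedPrimes_of_mem_minimalPrimes {R : Type*} [CommRing R] [IsNoetherianRing R]
    {p : Ideal R} (hp : p ∈ minimalPrimes R) : p ∈ associatedPrimes R R := by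
  have h : Module.annihilator R R = ⊥ := Module.annihilator_eq_bot.mpr inferInstance
  exact Module.associatedPrimes.minimalPrimes_annihilator_subset_associatedPrimes (R := R) (M := R) (by rw [h]; exact hp)

/-- Core of Krull's Hauptidealsatz in the situation needed: in a Noetherian local ring whose
maximal ideal is the unique prime containing `y`, any prime strictly below the maximal ideal
is a minimal prime. -/
lemma core_PIT {R : Type*} [CommRing R] [IsNoetherianRing R] [IsLocalRing R] {y : R}
    (hy : y ∈ maximalIdeal R)
    (huniq : ∀ P : Ideal R, P.IsPrime → y ∈ P → P = maximalIdeal R)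
    {Q Q' : Ideal R} (hQ : Q.IsPrime) (hQ' : Q'.IsPrime)
    (hlt : Q < maximalIdeal R) (hle : Q' ≤ Q) : Q ≤ Q' := by
  haveI := hQ
  have hyQ : y ∉ Q := fun h => hlt.ne (huniq Q hQ h)
  let W := Localization.AtPrime Q
  let g := algebraMap R W
  haveI : IsNoetherianRing W := IsLocalization.isNoetherianRing Q.primeCompl W inferInstance
  let symb : ℕ → Ideal R := fun n => ((Q ^ n).map g).comap g
  have symb_anti : ∀ n, symb (n + 1) ≤ symb n := fun n =>
    Ideal.comap_mono (Ideal.map_mono (Ideal.pow_le_pow_right (Nat.le_succ n)))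
  have symb_cancel : ∀ n (c : R), c * y ∈ symb n → c ∈ symb n := by
    intro n c hc
    obtain ⟨v, hv⟩ : IsUnit (g y) := IsLocalization.map_units W (⟨y, hyQ⟩ : Q.primeCompl)
    have hmem : g c * g y ∈ (Q ^ n).map g := by
      rw [← map_mul]; exact hc
    have h2 : g c = g c * g y * ↑v⁻¹ := by
      rw [← hv, mul_assoc, Units.mul_inv, mul_one]
    show g c ∈ (Q ^ n).map g
    rw [h2]
    exact Ideal.mul_mem_right _ _ hmem
  -- the quotient ring R/(y) is Artinian
  have hspan : Ideal.span {y} ≤ maximalIdeal R := (Ideal.span_singleton_le_iff_mem _).mpr hy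
  let Rbar := R ⧸ Ideal.span {y}
  let mk : R →+* Rbar := Ideal.Quotient.mk _
  have hmk : Function.Surjective mk := Ideal.Quotient.mk_surjective
  have hker : RingHom.ker mk = Ideal.span {y} := Ideal.mk_ker
  have hmbar_max : ((maximalIdeal R).map mk).IsMaximal := by
    rcases Ideal.map_eq_top_or_isMaximal_of_surjective mk hmk
      (maximalIdeal.isMaximal R) with h | h
    · exfalso
      have h2 := Ideal.comap_map_of_surjective mk hmk (maximalIdeal R)
      rw [h, Ideal.comap_top, ← RingHom.ker_eq_comap_bot, hker,
        sup_eq_left.mpr hspan] at h2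
      exact (maximalIdeal.isMaximal R).ne_top h2.symm
    · exact h
  have hmbar_nil : IsNilpotent ((maximalIdeal R).map mk) := by
    have hlenil : (maximalIdeal R).map mk ≤ nilradical Rbar := by
      rw [nilradical_eq_sInf]
      refine le_sInf fun J hJ => ?_
      haveI : J.IsPrime := hJ
      have hyJ : y ∈ J.comap mk := by
        rw [Ideal.mem_comap]
        have h0 : mk y = 0 := Ideal.Quotient.eq_zero_iff_mem.mpr (Ideal.subset_span rfl)
        rw [h0]; exact J.zero_mem
      have heqm := huniq (J.comap mk) (Ideal.IsPrime.comap _) hyJ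
      calc (maximalIdeal R).map mk = (J.comap mk).map mk := by rw [heqm]
        _ ≤ J := Ideal.map_comap_le
    obtain ⟨k, hk⟩ := IsNoetherianRing.isNilpotent_nilradical Rbar
    refine ⟨k, ?_⟩
    have h3 := Ideal.pow_right_mono hlenil k
    rw [hk] at h3
    exact le_bot_iff.mp (by simpa using h3)
  haveI : IsArtinianRing Rbar := artinian_of_nilpotent_maximal _ hmbar_max hmbar_nil
  -- stabilization of symbolic powers mod (y)
  let f : ℕ →o (Ideal Rbar)ᵒᵈ :=
    ⟨fun n => (symb n).map mk,
     fun a b hab => Ideal.map_mono ((antitone_nat_of_succ_le symb_anti) hab)⟩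
  obtain ⟨n, hn⟩ := IsArtinian.monotone_stabilizes f
  have heq : (symb n).map mk = (symb (n + 1)).map mk := hn (n + 1) (Nat.le_succ n)
  have hsup : symb n ⊔ Ideal.span {y} = symb (n + 1) ⊔ Ideal.span {y} := by
    have h1 := Ideal.comap_map_of_surjective mk hmk (symb n)
    have h2 := Ideal.comap_map_of_surjective mk hmk (symb (n + 1))
    rw [← RingHom.ker_eq_comap_bot, hker] at h1 h2
    rw [← h1, ← h2, heq]
  -- Nakayama
  have hNN : symb n ≤ symb (n + 1) ⊔ Ideal.span {y} • symb n := by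
    intro a ha
    have h3 : a ∈ symb (n + 1) ⊔ Ideal.span {y} := by
      rw [← hsup]
      exact Submodule.mem_sup_left ha
    obtain ⟨c, hc, d, hd, rfl⟩ := Submodule.mem_sup.mp h3
    obtain ⟨e, rfl⟩ := Ideal.mem_span_singleton'.mp hd
    have hey : e * y ∈ symb n := by
      have := (symb n).sub_mem ha (symb_anti n hc)
      simpa using this
    have he : e ∈ symb n := symb_cancel n e hey
    refine Submodule.add_mem_sup hc ?_
    rw [mul_comm]
    exact Submodule.smul_mem_smul (Ideal.mem_span_singleton_self y) he
  have hjac : Ideal.span {y} ≤ Ideal.jacobson ⊥ := by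
    rw [IsLocalRing.jacobson_eq_maximalIdeal ⊥ bot_ne_top]
    exact hspan
  have hstab : symb n = symb (n + 1) := by
    have h4 := Submodule.sup_eq_sup_smul_of_le_smul_of_le_jacobson
      (IsNoetherian.noetherian (symb n)) hjac hNN
    rw [Submodule.bot_smul, sup_bot_eq] at h4
    exact le_antisymm (le_sup_right.trans h4.le) (symb_anti n)
  -- push forward to the localization and apply Nakayama there
  have hQW : (Q.map g) ^ n = (Q.map g) ^ (n + 1) := by
    have h5 : (symb n).map g = (symb (n + 1)).map g := by rw [hstab]
    rwa [IsLocalization.map_comap Q.primeCompl W, IsLocalization.map_comap Q.primeCompl W,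
      Ideal.map_pow, Ideal.map_pow] at h5
  have hQWbot : (Q.map g) ^ n = ⊥ := by
    refine Submodule.eq_bot_of_le_smul_of_le_jacobson_bot (Q.map g) _
      (IsNoetherian.noetherian _) ?_ ?_
    · rw [smul_eq_mul, ← pow_succ']
      exact hQW.le
    · rw [IsLocalRing.jacobson_eq_maximalIdeal ⊥ bot_ne_top,
        ← Localization.AtPrime.map_eq_maximalIdeal]
  -- conclude Q ≤ Q'
  intro z hz
  have hzn : g z ^ n ∈ (Q.map g) ^ n := Ideal.pow_mem_pow (Ideal.mem_map_of_mem g hz) n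
  rw [hQWbot, Submodule.mem_bot, ← map_pow] at hzn
  obtain ⟨t, ht⟩ := (IsLocalization.map_eq_zero_iff Q.primeCompl W (z ^ n)).mp hzn
  have htz : (t : R) * z ^ n ∈ Q' := by rw [ht]; exact Q'.zero_mem
  have htQ' : (t : R) ∉ Q' := fun h => t.2 (hle h)
  rcases hQ'.mem_or_mem htz with h | h
  · exact absurd h htQ'
  · exact hQ'.mem_of_pow_mem n h

/-- Under the same hypotheses, the prime `𝔭 = (𝔯B, b)` has height exactly `1`
(height of a prime ideal = its height as a point of the prime spectrum). -/
theorem stmt2 {A B : Type*} [CommRing A] [CommRing B]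
    [IsNoetherianRing A] [IsNoetherianRing B] [IsLocalRing A] [IsLocalRing B]
    [Algebra A B] (b : B)
    (hnzd : b ∈ nonZeroDivisors B) (hnu : ¬ IsUnit b)
    (𝔯 : Ideal A) (hA : associatedPrimes A A = {𝔯})
    (hflat : Module.Flat A (B ⧸ Ideal.span {b}))
    (hprime : (𝔯.map (algebraMap A B) ⊔ Ideal.span {b}).IsPrime) :
    Order.height (⟨𝔯.map (algebraMap A B) ⊔ Ideal.span {b}, hprime⟩ : PrimeSpectrum B) = 1 := by
  classical
  set 𝔭 : Ideal B := 𝔯.map (algebraMap A B) ⊔ Ideal.span {b} with h𝔭def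
  haveI := hprime
  -- `𝔯` is contained in every prime of `A`
  have hA𝔯 : ∀ p : Ideal A, p.IsPrime → 𝔯 ≤ p := by
    intro p hp
    haveI := hp
    obtain ⟨q, hq, hqle⟩ := Ideal.exists_minimalPrimes_le (I := (⊥ : Ideal A)) (J := p) bot_le
    have hass : q ∈ associatedPrimes A A := mem_associatedPrimes_of_mem_minimalPrimes hq
    rw [hA, Set.mem_singleton_iff] at hass
    exact hass ▸ hqle
  -- every prime of `B` containing `b` contains `𝔭`
  have hkey : ∀ q : Ideal B, q.IsPrime → b ∈ q → 𝔭 ≤ q := by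
    intro q hq hbq
    haveI := hq
    refine sup_le ?_ ((Ideal.span_singleton_le_iff_mem _).mpr hbq)
    rw [Ideal.map_le_iff_le_comap]
    exact hA𝔯 _ (Ideal.IsPrime.comap _)
  have hb𝔭 : b ∈ 𝔭 := Ideal.mem_sup_right (Ideal.subset_span rfl)
  -- no minimal prime of `B` contains `b`
  have hmin_not : ∀ q ∈ minimalPrimes B, b ∉ q := by
    intro q hq hbq
    obtain ⟨hqp, z, hz⟩ := isAssociatedPrime_iff.mp (mem_associatedPrimes_of_mem_minimalPrimes hq)
    have hb' : b ∈ (Submodule.span B {z}).annihilator := by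
      rw [hz] at hbq; rw [Submodule.mem_annihilator_span_singleton]
      simpa [Submodule.mem_colon_singleton] using hbq
    rw [Submodule.mem_annihilator_span_singleton, smul_eq_mul] at hb'
    have hz0 : z = 0 := hnzd.2 z (by rwa [mul_comm] at hb')
    apply hqp.ne_top
    rw [hz, hz0]; ext r; simp [Submodule.mem_colon_singleton]
  -- a minimal prime strictly below `𝔭`
  obtain ⟨q0, hq0, hq0le⟩ := Ideal.exists_minimalPrimes_le (I := (⊥ : Ideal B)) (J := 𝔭) bot_le
  have hq0lt : q0 < 𝔭 := hq0le.lt_of_ne (fun h => hmin_not q0 hq0 (by rw [h]; exact hb𝔭))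
  -- Krull's principal ideal theorem: no chain of two primes below `𝔭`
  have hPIT : ∀ u w : PrimeSpectrum B, u < w → w < (⟨𝔭, hprime⟩ : PrimeSpectrum B) → False := by
    intro u w huw hw𝔭
    let R' := Localization.AtPrime 𝔭
    let f := algebraMap B R'
    haveI : IsNoetherianRing R' := IsLocalization.isNoetherianRing 𝔭.primeCompl R' inferInstance
    have hwlt : w.asIdeal < 𝔭 := hw𝔭
    have hule : u.asIdeal ≤ 𝔭 := le_trans (show u.asIdeal ≤ w.asIdeal from huw.le) hwlt.le
    have hdisj_w : Disjoint (𝔭.primeCompl : Set B) (w.asIdeal : Set B) :=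
      Set.disjoint_left.mpr fun a ha haw => ha (hwlt.le haw)
    have hdisj_u : Disjoint (𝔭.primeCompl : Set B) (u.asIdeal : Set B) :=
      Set.disjoint_left.mpr fun a ha hau => ha (hule hau)
    have hwprime : (w.asIdeal.map f).IsPrime :=
      IsLocalization.isPrime_of_isPrime_disjoint 𝔭.primeCompl R' w.asIdeal w.2 hdisj_w
    have huprime : (u.asIdeal.map f).IsPrime :=
      IsLocalization.isPrime_of_isPrime_disjoint 𝔭.primeCompl R' u.asIdeal u.2 hdisj_u
    have huniq : ∀ P : Ideal R', P.IsPrime → f b ∈ P → P = IsLocalRing.maximalIdeal R' := by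
      intro P hP hbP
      haveI := hP
      have h𝔭le : 𝔭 ≤ P.comap f := hkey _ (Ideal.IsPrime.comap _) (Ideal.mem_comap.mpr hbP)
      refine le_antisymm (IsLocalRing.le_maximalIdeal hP.ne_top) ?_
      rw [← Localization.AtPrime.map_eq_maximalIdeal]
      calc 𝔭.map f ≤ (P.comap f).map f := Ideal.map_mono h𝔭le
        _ ≤ P := Ideal.map_comap_le
    have hymem : f b ∈ IsLocalRing.maximalIdeal R' := by
      rw [← Localization.AtPrime.map_eq_maximalIdeal]
      exact Ideal.mem_map_of_mem f hb𝔭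
    have hcw : (w.asIdeal.map f).comap f = w.asIdeal :=
      IsLocalization.comap_map_of_isPrime_disjoint 𝔭.primeCompl R' w.2 hdisj_w
    have hcu : (u.asIdeal.map f).comap f = u.asIdeal :=
      IsLocalization.comap_map_of_isPrime_disjoint 𝔭.primeCompl R' u.2 hdisj_u
    have hltW : w.asIdeal.map f < IsLocalRing.maximalIdeal R' := by
      refine lt_of_le_of_ne (IsLocalRing.le_maximalIdeal hwprime.ne_top) ?_
      intro hWm
      rw [hWm, show Ideal.comap f (maximalIdeal R') = 𝔭 from Localization.AtPrime.comap_maximalIdeal] at hcw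
      exact hwlt.ne hcw.symm
    have hle' : u.asIdeal.map f ≤ w.asIdeal.map f := Ideal.map_mono huw.le
    have hcore := core_PIT hymem huniq hwprime huprime hltW hle'
    have heqmap : w.asIdeal.map f = u.asIdeal.map f := le_antisymm hcore hle'
    have heq : w.asIdeal = u.asIdeal := by rw [← hcw, ← hcu, heqmap]
    exact huw.ne' (PrimeSpectrum.ext heq)
  -- conclude
  have hall : ∀ v : PrimeSpectrum B, v < ⟨𝔭, hprime⟩ → Order.height v = 0 := by
    intro v hv
    rw [Order.height_eq_zero]
    intro u hu
    rcases eq_or_lt_of_le hu with h | h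
    · exact h.ge
    · exact (hPIT u v h hv).elim
  have hfin : Order.height (⟨𝔭, hprime⟩ : PrimeSpectrum B) < ⊤ := by
    have hle1 : Order.height (⟨𝔭, hprime⟩ : PrimeSpectrum B) ≤ (1 : ℕ) := by
      rw [Order.height_le_coe_iff]
      intro v hv
      rw [hall v hv]
      norm_num
    exact lt_of_le_of_lt hle1 (WithTop.coe_lt_top 1)
  have h1 : Order.height (⟨𝔭, hprime⟩ : PrimeSpectrum B) = ((0 : ℕ) : ℕ∞) + 1 := by
    rw [Order.height_eq_coe_add_one_iff]
    exact ⟨hfin, ⟨⟨q0, hq0.1.1⟩, hq0lt, hall _ hq0lt⟩,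
      fun v hv => by rw [hall v hv]; norm_num⟩
  simpa using h1
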